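/- Let d ≥ 1, m ≥ 1, T ∈ (0,∞), 1 < p ≤ 3 and 0 < α ≤ 1. Let v : (0,T) × ℝ^d → ℝ^m be measurable with E := ess sup_{t∈(0,T)} ‖v(t,·)‖_{L²(ℝ^d)} < ∞, and suppose that lim_{z→0} |z|^{−α} ‖v(·,·+z) − v‖_{L^p(0,T;L^{2p/(p-1)}(ℝ^d))} = 0, the mixed norm being finite for each z ≠ 0. Then lim_{z→0} |z|^{−pα/3} ‖v(·,·+z) − v‖_{L³(0,T;L³(ℝ^d))} = 0. -/

import Mathlib

open MeasureTheory ENNReal Filter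

/-- The mixed norm `‖v‖_{L^p(0,T;L^q(ℝ^d))} = (∫_0^T ‖v(t,·)‖_{L^q}^p dt)^{1/p}`
(for finite exponents `p, q`). -/
noncomputable def mixedNorm (d m : ℕ) (T p q : ℝ)
    (v : ℝ → EuclideanSpace ℝ (Fin d) → EuclideanSpace ℝ (Fin m)) : ℝ≥0∞ :=
  (∫⁻ t in Set.Ioo 0 T, (eLpNorm (v t) (ENNReal.ofReal q) volume) ^ p) ^ (1 / p)

/-- Interpolation: `‖f‖_3^3 ≤ ‖f‖_2^{3-p} ‖f‖_{2p/(p-1)}^p` for `1 < p ≤ 3`. -/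
lemma interp_aux {X : Type*} [MeasurableSpace X] (μ : Measure X) {F : Type*}
    [NormedAddCommGroup F] (f : X → F) (hf : AEStronglyMeasurable f μ)
    {p : ℝ} (hp1 : 1 < p) (hp3 : p ≤ 3) :
    eLpNorm f (ENNReal.ofReal 3) μ ^ (3 : ℝ) ≤
      eLpNorm f 2 μ ^ (3 - p) * eLpNorm f (ENNReal.ofReal (2 * p / (p - 1))) μ ^ p := by
  rcases eq_or_lt_of_le hp3 with rfl | hp3'
  · have hq : 2 * (3 : ℝ) / ((3 : ℝ) - 1) = 3 := by norm_num
    rw [hq, sub_self, ENNReal.rpow_zero, one_mul]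
  set q : ℝ := 2 * p / (p - 1) with hqdef
  have hp1' : (0 : ℝ) < p - 1 := by linarith
  have hp3'' : (0 : ℝ) < 3 - p := by linarith
  have hq0 : 0 < q := by positivity
  have e3 : eLpNorm f (ENNReal.ofReal 3) μ =
      (∫⁻ x, (‖f x‖₊ : ℝ≥0∞) ^ (3 : ℝ) ∂μ) ^ (1 / (3 : ℝ)) := by
    simp only [← enorm_eq_nnnorm]
    rw [eLpNorm_eq_lintegral_rpow_enorm_toReal (by simp) (by simp),
      ENNReal.toReal_ofReal (by norm_num)]
  have e2 : eLpNorm f 2 μ = (∫⁻ x, (‖f x‖₊ : ℝ≥0∞) ^ (2 : ℝ) ∂μ) ^ (1 / (2 : ℝ)) := by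
    simp only [← enorm_eq_nnnorm]
    rw [eLpNorm_eq_lintegral_rpow_enorm_toReal (by simp) (by simp)]
    norm_num
  have eq' : eLpNorm f (ENNReal.ofReal q) μ =
      (∫⁻ x, (‖f x‖₊ : ℝ≥0∞) ^ q ∂μ) ^ (1 / q) := by
    simp only [← enorm_eq_nnnorm]
    rw [eLpNorm_eq_lintegral_rpow_enorm_toReal (by simp [hq0, hq0.le, ENNReal.ofReal_eq_zero, not_le])
      (by simp), ENNReal.toReal_ofReal hq0.le]
  have hc : Real.HolderConjugate (2 / (3 - p)) (2 / (p - 1)) := by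
    refine ⟨?_, by positivity, by positivity⟩
    rw [inv_div, inv_div, inv_one]; ring
  have hold := ENNReal.lintegral_mul_le_Lp_mul_Lq μ hc
    (hf.enorm.pow_const (3 - p)) (hf.enorm.pow_const p)
  have h1 : ∀ x, (‖f x‖₊ : ℝ≥0∞) ^ (3 - p) * (‖f x‖₊ : ℝ≥0∞) ^ p
      = (‖f x‖₊ : ℝ≥0∞) ^ (3 : ℝ) := by
    intro x
    rw [← ENNReal.rpow_add_of_nonneg _ _ (by linarith) (by linarith)]
    norm_num
  have h2 : ∀ x, ((‖f x‖₊ : ℝ≥0∞) ^ (3 - p)) ^ (2 / (3 - p)) = (‖f x‖₊ : ℝ≥0∞) ^ (2 : ℝ) := by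
    intro x
    rw [← ENNReal.rpow_mul]
    congr 1
    field_simp
  have h3 : ∀ x, ((‖f x‖₊ : ℝ≥0∞) ^ p) ^ (2 / (p - 1)) = (‖f x‖₊ : ℝ≥0∞) ^ q := by
    intro x
    rw [← ENNReal.rpow_mul]
    congr 1
    rw [hqdef]; ring
  simp only [enorm_eq_nnnorm, Pi.mul_apply, h1, h2, h3, one_div_div] at hold
  have key : (∫⁻ x, (‖f x‖₊ : ℝ≥0∞) ^ (3 : ℝ) ∂μ) ≤
      (∫⁻ x, (‖f x‖₊ : ℝ≥0∞) ^ (2 : ℝ) ∂μ) ^ ((3 - p) / 2) *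
        (∫⁻ x, (‖f x‖₊ : ℝ≥0∞) ^ q ∂μ) ^ ((p - 1) / 2) := hold
  calc eLpNorm f (ENNReal.ofReal 3) μ ^ (3 : ℝ)
      = (∫⁻ x, (‖f x‖₊ : ℝ≥0∞) ^ (3 : ℝ) ∂μ) := by
        rw [e3, ← ENNReal.rpow_mul]; norm_num
    _ ≤ (∫⁻ x, (‖f x‖₊ : ℝ≥0∞) ^ (2 : ℝ) ∂μ) ^ ((3 - p) / 2) *
        (∫⁻ x, (‖f x‖₊ : ℝ≥0∞) ^ q ∂μ) ^ ((p - 1) / 2) := key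
    _ = eLpNorm f 2 μ ^ (3 - p) * eLpNorm f (ENNReal.ofReal q) μ ^ p := by
        rw [e2, eq', ← ENNReal.rpow_mul, ← ENNReal.rpow_mul]
        congr 1
        · congr 1; ring
        · congr 1
          rw [hqdef]
          field_simp

/-- **Space–time Besov reduction (Theorems 1.1(1) and 1.3(1)).**
For `d, m ≥ 1`, `T ∈ (0,∞)`, `1 < p ≤ 3`, `0 < α ≤ 1`, and a measurable
`v : (0,T) × ℝ^d → ℝ^m` with `ess sup_{t∈(0,T)} ‖v(t,·)‖_{L²} < ∞`, finite mixed norms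
`‖v(·,·+z) − v‖_{L^p(0,T;L^{2p/(p-1)})}` for `z ≠ 0`, and
`|z|^{−α} ‖v(·,·+z) − v‖_{L^p(0,T;L^{2p/(p-1)})} → 0` as `z → 0`, one has
`|z|^{−pα/3} ‖v(·,·+z) − v‖_{L³(0,T;L³)} → 0` as `z → 0`. -/
theorem stmt3 (d m : ℕ) (hd : 1 ≤ d) (hm : 1 ≤ m) (T p α : ℝ)
    (hT : 0 < T) (hp1 : 1 < p) (hp3 : p ≤ 3) (hα0 : 0 < α) (hα1 : α ≤ 1)
    (v : ℝ → EuclideanSpace ℝ (Fin d) → EuclideanSpace ℝ (Fin m))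
    (hmeas : Measurable (Function.uncurry v))
    (hE : essSup (fun t => eLpNorm (v t) 2 volume) (volume.restrict (Set.Ioo 0 T)) < ⊤)
    (hfin : ∀ z : EuclideanSpace ℝ (Fin d), z ≠ 0 →
      mixedNorm d m T p (2 * p / (p - 1)) (fun t x => v t (x + z) - v t x) < ⊤)
    (hlim : Tendsto
      (fun z : EuclideanSpace ℝ (Fin d) =>
        ENNReal.ofReal (‖z‖ ^ (-α)) *
          mixedNorm d m T p (2 * p / (p - 1)) (fun t x => v t (x + z) - v t x))
      (nhdsWithin 0 {z | z ≠ 0}) (nhds 0)) :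
    Tendsto
      (fun z : EuclideanSpace ℝ (Fin d) =>
        ENNReal.ofReal (‖z‖ ^ (-(p * α / 3))) *
          mixedNorm d m T 3 3 (fun t x => v t (x + z) - v t x))
      (nhdsWithin 0 {z | z ≠ 0}) (nhds 0) := by
  set E : ℝ≥0∞ := essSup (fun t => eLpNorm (v t) 2 volume) (volume.restrict (Set.Ioo 0 T))
    with hEdef
  set q : ℝ := 2 * p / (p - 1) with hqdef
  have hp0 : (0 : ℝ) < p := by linarith
  have hvm : ∀ t, Measurable (v t) := fun t => hmeas.comp measurable_prodMk_left
  have hEtop : (2 : ℝ≥0∞) * E ≠ ⊤ := ENNReal.mul_ne_top (by simp) hE.ne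
  set K : ℝ≥0∞ := (2 * E) ^ ((3 - p) / 3) with hKdef
  have hKtop : K ≠ ⊤ := ENNReal.rpow_ne_top_of_nonneg (by linarith) hEtop
  -- the key pointwise-in-`z` bound
  have key : ∀ z : EuclideanSpace ℝ (Fin d),
      mixedNorm d m T 3 3 (fun t x => v t (x + z) - v t x) ≤
        K * (mixedNorm d m T p q (fun t x => v t (x + z) - v t x)) ^ (p / 3) := by
    intro z
    set w : ℝ → EuclideanSpace ℝ (Fin d) → EuclideanSpace ℝ (Fin m) :=
      fun t x => v t (x + z) - v t x with hwdef
    have hwm : ∀ t, Measurable (w t) :=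
      fun t => ((hvm t).comp (measurable_add_const z)).sub (hvm t)
    have h1 : ∀ t, eLpNorm (w t) (ENNReal.ofReal 3) volume ^ (3 : ℝ) ≤
        eLpNorm (w t) 2 volume ^ (3 - p) * eLpNorm (w t) (ENNReal.ofReal q) volume ^ p :=
      fun t => interp_aux volume (w t) (hwm t).aestronglyMeasurable hp1 hp3
    have h2 : ∀ᵐ t ∂(volume.restrict (Set.Ioo 0 T)),
        eLpNorm (w t) 2 volume ≤ 2 * E := by
      filter_upwards [ae_le_essSup (μ := volume.restrict (Set.Ioo 0 T))
        (fun t => eLpNorm (v t) 2 volume)] with t ht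
      have sh : eLpNorm (fun x => v t (x + z)) 2 volume = eLpNorm (v t) 2 volume :=
        eLpNorm_comp_measurePreserving (hvm t).aestronglyMeasurable
          (measurePreserving_add_right volume z)
      calc eLpNorm (w t) 2 volume
          ≤ eLpNorm (fun x => v t (x + z)) 2 volume + eLpNorm (v t) 2 volume :=
            eLpNorm_sub_le (((hvm t).comp (measurable_add_const z)).aestronglyMeasurable)
              (hvm t).aestronglyMeasurable one_le_two
        _ = eLpNorm (v t) 2 volume + eLpNorm (v t) 2 volume := by rw [sh]
        _ ≤ E + E := add_le_add ht ht
        _ = 2 * E := (two_mul E).symm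
    have h3 : ∀ᵐ t ∂(volume.restrict (Set.Ioo 0 T)),
        eLpNorm (w t) (ENNReal.ofReal 3) volume ^ (3 : ℝ) ≤
          (2 * E) ^ (3 - p) * eLpNorm (w t) (ENNReal.ofReal q) volume ^ p := by
      filter_upwards [h2] with t ht
      exact (h1 t).trans
        (mul_le_mul_left (ENNReal.rpow_le_rpow ht (by linarith)) _)
    have h4 : (∫⁻ t in Set.Ioo 0 T, eLpNorm (w t) (ENNReal.ofReal 3) volume ^ (3 : ℝ)) ≤
        (2 * E) ^ (3 - p) *
          ∫⁻ t in Set.Ioo 0 T, eLpNorm (w t) (ENNReal.ofReal q) volume ^ p := by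
      rw [← lintegral_const_mul' _ _ (ENNReal.rpow_ne_top_of_nonneg (by linarith) hEtop)]
      exact lintegral_mono_ae h3
    have h5 := ENNReal.rpow_le_rpow h4 (by norm_num : (0:ℝ) ≤ 1 / 3)
    calc mixedNorm d m T 3 3 w
        = (∫⁻ t in Set.Ioo 0 T,
            eLpNorm (w t) (ENNReal.ofReal 3) volume ^ (3 : ℝ)) ^ (1 / (3 : ℝ)) := rfl
      _ ≤ ((2 * E) ^ (3 - p) *
            ∫⁻ t in Set.Ioo 0 T, eLpNorm (w t) (ENNReal.ofReal q) volume ^ p) ^ (1 / (3:ℝ)) := h5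
      _ = K * (mixedNorm d m T p q w) ^ (p / 3) := by
          rw [ENNReal.mul_rpow_of_nonneg _ _ (by norm_num : (0:ℝ) ≤ 1/3)]
          congr 1
          · rw [hKdef, ← ENNReal.rpow_mul]
            congr 1; ring
          · show _ = (((∫⁻ t in Set.Ioo 0 T,
                eLpNorm (w t) (ENNReal.ofReal q) volume ^ p) ^ (1 / p)) ^ (p / 3))
            rw [← ENNReal.rpow_mul]
            congr 1
            field_simp
    -- end of `key`
  -- comparison with the hypothesis limit function
  have keybnd : ∀ z : EuclideanSpace ℝ (Fin d), z ≠ 0 →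
      ENNReal.ofReal (‖z‖ ^ (-(p * α / 3))) *
          mixedNorm d m T 3 3 (fun t x => v t (x + z) - v t x) ≤
        K * (ENNReal.ofReal (‖z‖ ^ (-α)) *
          mixedNorm d m T p q (fun t x => v t (x + z) - v t x)) ^ (p / 3) := by
    intro z hz
    have hz0 : 0 < ‖z‖ := norm_pos_iff.mpr hz
    have hof : ENNReal.ofReal (‖z‖ ^ (-(p * α / 3))) =
        (ENNReal.ofReal (‖z‖ ^ (-α))) ^ (p / 3) := by
      have hre : (‖z‖ ^ (-α)) ^ (p / 3) = ‖z‖ ^ (-(p * α / 3)) := by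
        rw [← Real.rpow_mul hz0.le]
        congr 1
        ring
      rw [← hre, ENNReal.ofReal_rpow_of_pos (Real.rpow_pos_of_pos hz0 _)]
    calc ENNReal.ofReal (‖z‖ ^ (-(p * α / 3))) *
          mixedNorm d m T 3 3 (fun t x => v t (x + z) - v t x)
        ≤ ENNReal.ofReal (‖z‖ ^ (-(p * α / 3))) *
            (K * (mixedNorm d m T p q (fun t x => v t (x + z) - v t x)) ^ (p / 3)) :=
          mul_le_mul_right (key z) _
      _ = K * (ENNReal.ofReal (‖z‖ ^ (-α)) *
            mixedNorm d m T p q (fun t x => v t (x + z) - v t x)) ^ (p / 3) := by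
          rw [hof, ENNReal.mul_rpow_of_nonneg _ _ (by positivity : (0:ℝ) ≤ p / 3)]
          ring
  -- conclude by squeezing
  have hlim2 : Tendsto
      (fun z : EuclideanSpace ℝ (Fin d) =>
        K * (ENNReal.ofReal (‖z‖ ^ (-α)) *
          mixedNorm d m T p q (fun t x => v t (x + z) - v t x)) ^ (p / 3))
      (nhdsWithin 0 {z | z ≠ 0}) (nhds 0) :=
    (ENNReal.tendsto_const_mul_rpow_nhds_zero_of_pos hKtop (by positivity)).comp hlim
  refine tendsto_of_tendsto_of_tendsto_of_le_of_le' tendsto_const_nhds hlim2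
    (Eventually.of_forall fun z => zero_le) ?_
  exact Filter.eventually_of_mem self_mem_nhdsWithin fun z hz => keybnd z hz
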